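/- Let H be a real Hilbert space, S ⊆ H a nonempty bounded closed convex set, ℓ > 0, L ≥ 0, and G : H → H a map that is monotone and ℓ-Lipschitz on S with ‖G(z)‖ ≤ L for all z ∈ S. Let 0 < α ≤ 1/ℓ. For z ∈ S define P_z(w) = Π_S(z − α·G(w)) and the one-step Extragradient map EG(z) = P_z(P_z(z)). Then for all z, z' ∈ S: ‖EG(z) − EG(z')‖ ≤ ‖z − z'‖ + 2·L·ℓ²·α³. -/

import Mathlib

open RealInnerProductSpace

/-- `p` is the metric projection of `v` onto `S`. -/
def IsProjOn {H : Type*} [NormedAddCommGroup H] (S : Set H) (v p : H) : Prop :=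
  p ∈ S ∧ ∀ w ∈ S, ‖v - p‖ ≤ ‖v - w‖

section Aux
variable {H : Type*} [NormedAddCommGroup H] [InnerProductSpace ℝ H]

lemma IsProjOn.inner_le {S : Set H} (hcv : Convex ℝ S) {v p : H}
    (h : IsProjOn S v p) {w : H} (hw : w ∈ S) : ⟪v - p, w - p⟫ ≤ 0 := by
  have key : ∀ θ : ℝ, 0 < θ → θ ≤ 1 → ⟪v - p, w - p⟫ ≤ θ / 2 * ‖w - p‖ ^ 2 := by
    intro θ hθ hθ1
    have hmem : p + θ • (w - p) ∈ S := by
      have := hcv h.1 hw (by linarith : (0:ℝ) ≤ 1 - θ) hθ.le (by ring)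
      convert this using 1
      module
    have hle := h.2 _ hmem
    have hsq : ‖v - p‖ ^ 2 ≤ ‖v - p - θ • (w - p)‖ ^ 2 := by
      have : v - (p + θ • (w - p)) = v - p - θ • (w - p) := by abel
      rw [← this]
      exact pow_le_pow_left₀ (norm_nonneg _) hle 2
    have hexp : ‖v - p - θ • (w - p)‖ ^ 2
        = ‖v - p‖ ^ 2 - 2 * θ * ⟪v - p, w - p⟫ + θ ^ 2 * ‖w - p‖ ^ 2 := by
      rw [norm_sub_sq_real, real_inner_smul_right, norm_smul]
      simp [abs_of_pos hθ]
      ring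
    nlinarith
  rcases le_or_gt ⟪v - p, w - p⟫ 0 with h0 | h0
  · exact h0
  · exfalso
    rcases eq_or_lt_of_le (sq_nonneg ‖w - p‖) with hB | hB
    · have := key 1 one_pos le_rfl
      nlinarith
    · set B := ‖w - p‖ ^ 2 with hBdef
      set θ := min 1 (⟪v - p, w - p⟫ / B) with hθdef
      have hθpos : 0 < θ := lt_min one_pos (div_pos h0 hB)
      have := key θ hθpos (min_le_left _ _)
      have h2 : θ ≤ ⟪v - p, w - p⟫ / B := min_le_right _ _
      have : θ / 2 * B < ⟪v - p, w - p⟫ := by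
        have : θ * B ≤ ⟪v - p, w - p⟫ := by
          rw [← le_div_iff₀ hB] ; exact h2
        nlinarith
      linarith [key θ hθpos (min_le_left _ _)]

lemma IsProjOn.norm_sub_le {S : Set H} (hcv : Convex ℝ S) {v v' p p' : H}
    (h : IsProjOn S v p) (h' : IsProjOn S v' p') : ‖p - p'‖ ≤ ‖v - v'‖ := by
  have h1 := h.inner_le hcv h'.1
  have h2 := h'.inner_le hcv h.1
  have key : ‖p - p'‖ ^ 2 ≤ ⟪v - v', p - p'⟫ := by
    have e : ⟪v - v', p - p'⟫ - ⟪p - p', p - p'⟫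
        = (-⟪v - p, p' - p⟫) + (-⟪v' - p', p - p'⟫) := by
      simp only [inner_sub_left, inner_sub_right]
      linarith [real_inner_comm p p']
    rw [← real_inner_self_eq_norm_sq]
    linarith
  have hcs := real_inner_le_norm (v - v') (p - p')
  rcases eq_or_lt_of_le (norm_nonneg (p - p')) with h0 | h0
  · rw [← h0]; exact norm_nonneg _
  · nlinarith

lemma isProjOn_self {S : Set H} {z : H} (hz : z ∈ S) : IsProjOn S z z :=
  ⟨hz, fun w _ => by simp⟩

lemma exists_isProjOn {S : Set H} [CompleteSpace H] (hne : S.Nonempty) (hcl : IsClosed S)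
    (hcv : Convex ℝ S) (v : H) : ∃ p, IsProjOn S v p := by
  obtain ⟨p, hpS, hmin⟩ := exists_norm_eq_iInf_of_complete_convex hne hcl.isComplete hcv v
  refine ⟨p, hpS, fun w hw => ?_⟩
  rw [hmin]
  have hbdd : BddBelow (Set.range fun w : S => ‖v - (w : H)‖) :=
    ⟨0, by rintro x ⟨i, rfl⟩; exact norm_nonneg _⟩
  exact ciInf_le hbdd ⟨w, hw⟩

end Aux

section Aux2
variable {H : Type*} [NormedAddCommGroup H] [InnerProductSpace ℝ H]

lemma exists_fixedPoint_proj {S : Set H} [CompleteSpace H] (hne : S.Nonempty)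
    (hcl : IsClosed S) (hcv : Convex ℝ S) (G : H → H) (ℓ : ℝ) (hℓ : 0 ≤ ℓ)
    (hlip : ∀ u ∈ S, ∀ v ∈ S, ‖G u - G v‖ ≤ ℓ * ‖u - v‖)
    (c : ℝ) (hc : 0 ≤ c) (hcℓ : c * ℓ < 1) (z : H) :
    ∃ w ∈ S, IsProjOn S (z - c • G w) w := by
  haveI : Nonempty S := hne.to_subtype
  haveI : CompleteSpace S := hcl.completeSpace_coe
  choose proj hproj using exists_isProjOn hne hcl hcv
  set f : S → S := fun w => ⟨proj (z - c • G (w : H)), (hproj _).1⟩ with hf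
  have hK : (0:ℝ) ≤ c * ℓ := mul_nonneg hc hℓ
  have hlipf : LipschitzWith ⟨c * ℓ, hK⟩ f := by
    apply LipschitzWith.of_dist_le_mul
    intro x y
    have h1 : dist (f x) (f y) = ‖proj (z - c • G (x:H)) - proj (z - c • G (y:H))‖ := by
      rw [Subtype.dist_eq, dist_eq_norm]
    have h2 : ‖proj (z - c • G (x:H)) - proj (z - c • G (y:H))‖
        ≤ ‖(z - c • G (x:H)) - (z - c • G (y:H))‖ :=
      IsProjOn.norm_sub_le hcv (hproj _) (hproj _)
    have h3 : (z - c • G (x:H)) - (z - c • G (y:H)) = c • (G (y:H) - G (x:H)) := by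
      rw [smul_sub]; abel
    have h4 : ‖(z - c • G (x:H)) - (z - c • G (y:H))‖ ≤ c * ℓ * ‖(x:H) - (y:H)‖ := by
      rw [h3, norm_smul, Real.norm_eq_abs, abs_of_nonneg hc, norm_sub_rev]
      rw [mul_assoc]
      exact mul_le_mul_of_nonneg_left (hlip _ x.2 _ y.2) hc
    rw [h1, Subtype.dist_eq, dist_eq_norm]
    exact le_trans h2 h4
  have hcontr : ContractingWith ⟨c * ℓ, hK⟩ f := by
    refine ⟨?_, hlipf⟩
    refine NNReal.coe_lt_coe.1 ?_
    exact_mod_cast hcℓ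
  set w := hcontr.fixedPoint f with hw
  have hfix : f w = w := hcontr.fixedPoint_isFixedPt
  refine ⟨(w : H), w.2, ?_⟩
  have : proj (z - c • G (w : H)) = (w : H) := congrArg Subtype.val hfix
  have h5 := hproj (z - c • G (w : H))
  rwa [this] at h5

lemma resolvent_nonexpansive {S : Set H} (hcv : Convex ℝ S) (G : H → H) (c : ℝ) (hc : 0 ≤ c)
    (hmono : ∀ u ∈ S, ∀ v ∈ S, 0 ≤ ⟪G u - G v, u - v⟫)
    {z z' w w' : H} (hw : w ∈ S) (hw' : w' ∈ S)
    (h : IsProjOn S (z - c • G w) w) (h' : IsProjOn S (z' - c • G w') w') :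
    ‖w - w'‖ ≤ ‖z - z'‖ := by
  have i1 := h.inner_le hcv hw'
  have i2 := h'.inner_le hcv hw
  have hm := hmono w hw w' hw'
  have key : ‖w - w'‖ ^ 2 ≤ ⟪z - z', w - w'⟫ := by
    have e : ⟪z - c • G w - w, w' - w⟫ + ⟪z' - c • G w' - w', w - w'⟫
        = -(⟪z - z', w - w'⟫ - ⟪w - w', w - w'⟫) + c * ⟪G w - G w', w - w'⟫ := by
      simp only [inner_sub_left, inner_sub_right, real_inner_smul_left]
      linarith [real_inner_comm w w', real_inner_comm z w', real_inner_comm z' w,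
        real_inner_comm (G w) w', real_inner_comm (G w') w]
    rw [← real_inner_self_eq_norm_sq]
    nlinarith
  have hcs := real_inner_le_norm (z - z') (w - w')
  rcases eq_or_lt_of_le (norm_nonneg (w - w')) with h0 | h0
  · rw [← h0]; exact norm_nonneg _
  · nlinarith

end Aux2

/-- Lemma B.7.  For a monotone, `ℓ`-Lipschitz operator `G` on a nonempty
bounded closed convex set `S` in a real Hilbert space with `‖G z‖ ≤ L` on `S`, and
`0 < α ≤ 1/ℓ`, the one-step Extragradient map `EG(z) = Π_S(z − α G(Π_S(z − α G(z))))`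
satisfies `‖EG(z) − EG(z')‖ ≤ ‖z − z'‖ + 2Lℓ²α³` for all `z, z' ∈ S`. -/
theorem extragradient_one_step_almost_nonexpansive
    {H : Type*} [NormedAddCommGroup H] [InnerProductSpace ℝ H] [CompleteSpace H]
    (S : Set H) (hSne : S.Nonempty) (hSbd : Bornology.IsBounded S)
    (hScl : IsClosed S) (hScv : Convex ℝ S)
    (ℓ L α : ℝ) (hℓ : 0 < ℓ) (hL : 0 ≤ L) (hα : 0 < α) (hαℓ : α ≤ 1 / ℓ)
    (G : H → H)
    (hmono : ∀ u ∈ S, ∀ v ∈ S, 0 ≤ ⟪G u - G v, u - v⟫)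
    (hlip : ∀ u ∈ S, ∀ v ∈ S, ‖G u - G v‖ ≤ ℓ * ‖u - v‖)
    (hbound : ∀ u ∈ S, ‖G u‖ ≤ L)
    (z z' p p' q q' : H) (hz : z ∈ S) (hz' : z' ∈ S)
    (hp : IsProjOn S (z - α • G z) p) (hq : IsProjOn S (z - α • G p) q)
    (hp' : IsProjOn S (z' - α • G z') p') (hq' : IsProjOn S (z' - α • G p') q') :
    ‖q - q'‖ ≤ ‖z - z'‖ + 2 * L * ℓ ^ 2 * α ^ 3 := by
  have hαℓ1 : α * ℓ ≤ 1 := by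
    rw [le_div_iff₀ hℓ] at hαℓ; linarith
  apply le_of_forall_pos_le_add
  intro ε hε
  set δ : ℝ := min (1/2) (ε / (4 * α * (L + 1))) with hδdef
  have hδpos : 0 < δ := lt_min (by norm_num) (by positivity)
  have hδle : δ ≤ 1/2 := min_le_left _ _
  set c : ℝ := (1 - δ) * α with hcdef
  have hc0 : 0 ≤ c := by
    have : (0:ℝ) ≤ 1 - δ := by linarith
    positivity
  have hcα : c ≤ α := by nlinarith
  have hcℓ : c * ℓ < 1 := by
    have h1 : c * ℓ = (1 - δ) * (α * ℓ) := by ring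
    nlinarith
  obtain ⟨w, hwS, hwproj⟩ :=
    exists_fixedPoint_proj hSne hScl hScv G ℓ hℓ.le hlip c hc0 hcℓ z
  obtain ⟨w', hw'S, hw'proj⟩ :=
    exists_fixedPoint_proj hSne hScl hScv G ℓ hℓ.le hlip c hc0 hcℓ z'
  -- generic one-sided bound
  have side : ∀ (y : H) (hy : y ∈ S) (P Q W : H), P ∈ S → W ∈ S →
      IsProjOn S (y - α • G y) P → IsProjOn S (y - α • G P) Q →
      IsProjOn S (y - c • G W) W →
      ‖Q - W‖ ≤ L * ℓ ^ 2 * α ^ 3 + 2 * (δ * α * L) := by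
    intro y hy P Q W hPS hWS hP hQ hW
    have hGW : ‖G W‖ ≤ L := hbound W hWS
    have hyW : ‖y - W‖ ≤ α * L := by
      have h1 := IsProjOn.norm_sub_le hScv (isProjOn_self hy) hW
      have h2 : y - (y - c • G W) = c • G W := by abel
      rw [h2, norm_smul, Real.norm_eq_abs, abs_of_nonneg hc0] at h1
      calc ‖y - W‖ ≤ c * ‖G W‖ := h1
        _ ≤ α * L := by nlinarith [norm_nonneg (G W)]
    have hPW : ‖P - W‖ ≤ α * ℓ * (α * L) + δ * α * L := by
      have h1 := IsProjOn.norm_sub_le hScv hP hW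
      have h2 : (y - α • G y) - (y - c • G W) = α • (G W - G y) - (δ * α) • G W := by
        rw [hcdef]; module
      rw [h2] at h1
      have h3 := norm_sub_le (α • (G W - G y)) ((δ * α) • G W)
      have h4 : ‖α • (G W - G y)‖ ≤ α * (ℓ * ‖W - y‖) := by
        rw [norm_smul, Real.norm_eq_abs, abs_of_pos hα]
        exact mul_le_mul_of_nonneg_left (hlip _ hWS _ hy) hα.le
      have h5 : ‖(δ * α) • G W‖ ≤ δ * α * L := by
        rw [norm_smul, Real.norm_eq_abs, abs_of_pos (by positivity : 0 < δ * α)]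
        exact mul_le_mul_of_nonneg_left hGW (by positivity)
      have h6 : ‖W - y‖ ≤ α * L := by rw [norm_sub_rev]; exact hyW
      have h7 : α * ℓ * ‖W - y‖ ≤ α * ℓ * (α * L) :=
        mul_le_mul_of_nonneg_left h6 (by positivity)
      nlinarith
    have hQW : ‖Q - W‖ ≤ α * ℓ * ‖P - W‖ + δ * α * L := by
      have h1 := IsProjOn.norm_sub_le hScv hQ hW
      have h2 : (y - α • G P) - (y - c • G W) = α • (G W - G P) - (δ * α) • G W := by
        rw [hcdef]; module
      rw [h2] at h1
      have h3 := norm_sub_le (α • (G W - G P)) ((δ * α) • G W)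
      have h4 : ‖α • (G W - G P)‖ ≤ α * (ℓ * ‖W - P‖) := by
        rw [norm_smul, Real.norm_eq_abs, abs_of_pos hα]
        exact mul_le_mul_of_nonneg_left (hlip _ hWS _ hPS) hα.le
      have h5 : ‖(δ * α) • G W‖ ≤ δ * α * L := by
        rw [norm_smul, Real.norm_eq_abs, abs_of_pos (by positivity : 0 < δ * α)]
        exact mul_le_mul_of_nonneg_left hGW (by positivity)
      rw [norm_sub_rev W P] at h4
      nlinarith
    have hδαL : 0 ≤ δ * α * L := by positivity
    nlinarith [norm_nonneg (P - W), mul_le_mul_of_nonneg_left hPW (by positivity : (0:ℝ) ≤ α * ℓ)]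
  have s1 := side z hz p q w hp.1 hwS hp hq hwproj
  have s2 := side z' hz' p' q' w' hp'.1 hw'S hp' hq' hw'proj
  have hww' : ‖w - w'‖ ≤ ‖z - z'‖ :=
    resolvent_nonexpansive hScv G c hc0 hmono hwS hw'S hwproj hw'proj
  have htri : ‖q - q'‖ ≤ ‖q - w‖ + ‖w - w'‖ + ‖w' - q'‖ := by
    have : q - q' = (q - w) + (w - w') + (w' - q') := by abel
    rw [this]
    exact norm_add₃_le
  have hwq' : ‖w' - q'‖ = ‖q' - w'‖ := norm_sub_rev _ _
  have hεδ : 4 * (δ * α * L) ≤ ε := by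
    have h1 : δ ≤ ε / (4 * α * (L + 1)) := min_le_right _ _
    have h2 : δ * (4 * α * (L + 1)) ≤ ε := by
      rw [← le_div_iff₀ (by positivity : 0 < 4 * α * (L + 1))]
      exact h1
    nlinarith
  rw [hwq'] at htri
  linarith
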